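/- Let H(t) = ((1+t)²/(2t)) log(1+t) − ((1−t)²/(2t)) log(1−t) − 2 for t ∈ (0,1), and let φ(t) = log(1 − t³), a strictly decreasing bijection from (0,1) onto (−∞,0). Then the composition H ∘ φ^{-1} is concave on (−∞, 0). (Obstruction to the optimal-transport proof of the logarithmic HLS inequality in dimension three.) -/

import Mathlib

open Real

/-- The function `H(t) = ((1+t)²/(2t)) log(1+t) − ((1−t)²/(2t)) log(1−t) − 2`
arising in the spherical average of the logarithmic kernel in 3D. -/
noncomputable def Hkernel (t : ℝ) : ℝ :=
  (1 + t) ^ 2 / (2 * t) * Real.log (1 + t) -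
    (1 - t) ^ 2 / (2 * t) * Real.log (1 - t) - 2

/-- `φ(t) = log(1 − t³)`, a strictly decreasing bijection from `(0,1)` onto
`(−∞,0)`. -/
noncomputable def phiCube (t : ℝ) : ℝ := Real.log (1 - t ^ 3)

/-! ### Auxiliary definitions -/

/-- Derivative of `Hkernel` on `(0,1)`. -/
noncomputable def Hd (t : ℝ) : ℝ :=
  1 / t - (1 - t ^ 2) / (2 * t ^ 2) * (Real.log (1 + t) - Real.log (1 - t))

/-- `−H'(t)(1−t³)/(3t²)`, the derivative of `H ∘ φ⁻¹` expressed in `t`. -/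
noncomputable def Fk (t : ℝ) : ℝ :=
  (1 - t ^ 3) / (3 * t ^ 2) *
    ((1 - t ^ 2) / (2 * t ^ 2) * (Real.log (1 + t) - Real.log (1 - t)) - 1 / t)

/-- Derivative of `Fk` on `(0,1)`. -/
noncomputable def Fd (t : ℝ) : ℝ :=
  (t ^ 5 + t ^ 3 + 2 * t ^ 2 - 4) / (6 * t ^ 5) *
      (Real.log (1 + t) - Real.log (1 - t)) +
    (4 - t ^ 3) / (3 * t ^ 4)

lemma hasDerivAt_Hkernel {t : ℝ} (h0 : 0 < t) (h1 : t < 1) :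
    HasDerivAt Hkernel (Hd t) t := by
  have ht : t ≠ 0 := ne_of_gt h0
  have hp0 : (0 : ℝ) < 1 + t := by linarith
  have hm0 : (0 : ℝ) < 1 - t := by linarith
  have hp : (1 : ℝ) + t ≠ 0 := ne_of_gt hp0
  have hm : (1 : ℝ) - t ≠ 0 := ne_of_gt hm0
  have h2t : (2 : ℝ) * t ≠ 0 := by positivity
  have hid : HasDerivAt (fun x : ℝ => x) 1 t := hasDerivAt_id t
  have hlp : HasDerivAt (fun x : ℝ => Real.log (1 + x)) (1 / (1 + t)) t := by
    simpa using (hid.const_add 1).log hp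
  have hlm : HasDerivAt (fun x : ℝ => Real.log (1 - x)) (-(1 / (1 - t))) t := by
    have := (hid.const_sub 1).log hm
    convert this using 1
    field_simp
  have hq1 : HasDerivAt (fun x : ℝ => (1 + x) ^ 2 / (2 * x))
      (-(1 - t ^ 2) / (2 * t ^ 2)) t := by
    have := HasDerivAt.fun_div ((hid.const_add 1).fun_pow 2) (hid.const_mul 2) h2t
    refine this.congr_deriv ?_
    field_simp
    ring
  have hq2 : HasDerivAt (fun x : ℝ => (1 - x) ^ 2 / (2 * x))
      (-(1 - t ^ 2) / (2 * t ^ 2)) t := by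
    have := HasDerivAt.fun_div ((hid.const_sub 1).fun_pow 2) (hid.const_mul 2) h2t
    refine this.congr_deriv ?_
    field_simp
    ring
  have hA : HasDerivAt (fun x : ℝ => (1 + x) ^ 2 / (2 * x) * Real.log (1 + x))
      (-(1 - t ^ 2) / (2 * t ^ 2) * Real.log (1 + t) + (1 + t) ^ 2 / (2 * t) * (1 / (1 + t)))
      t := hq1.mul hlp
  have hB : HasDerivAt (fun x : ℝ => (1 - x) ^ 2 / (2 * x) * Real.log (1 - x))
      (-(1 - t ^ 2) / (2 * t ^ 2) * Real.log (1 - t) + (1 - t) ^ 2 / (2 * t) *-(1 / (1 - t)))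
      t := hq2.mul hlm
  have := (hA.fun_sub hB).sub_const 2
  unfold Hkernel Hd
  refine this.congr_deriv ?_
  field_simp
  ring

lemma hasDerivAt_Fk {t : ℝ} (h0 : 0 < t) (h1 : t < 1) :
    HasDerivAt Fk (Fd t) t := by
  have ht : t ≠ 0 := ne_of_gt h0
  have hp0 : (0 : ℝ) < 1 + t := by linarith
  have hm0 : (0 : ℝ) < 1 - t := by linarith
  have hp : (1 : ℝ) + t ≠ 0 := ne_of_gt hp0
  have hm : (1 : ℝ) - t ≠ 0 := ne_of_gt hm0
  have h3t : (3 : ℝ) * t ^ 2 ≠ 0 := by positivity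
  have h2t : (2 : ℝ) * t ^ 2 ≠ 0 := by positivity
  have hid : HasDerivAt (fun x : ℝ => x) 1 t := hasDerivAt_id t
  have hlp : HasDerivAt (fun x : ℝ => Real.log (1 + x)) (1 / (1 + t)) t := by
    simpa using (hid.const_add 1).log hp
  have hlm : HasDerivAt (fun x : ℝ => Real.log (1 - x)) (-(1 / (1 - t))) t := by
    have := (hid.const_sub 1).log hm
    convert this using 1
    field_simp
  have hL : HasDerivAt (fun x : ℝ => Real.log (1 + x) - Real.log (1 - x))
      (1 / (1 + t) + 1 / (1 - t)) t := by
    have := hlp.fun_sub hlm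
    refine this.congr_deriv ?_
    ring
  -- (1 - t^3)/(3 t^2)
  have hq1 : HasDerivAt (fun x : ℝ => (1 - x ^ 3) / (3 * x ^ 2))
      ((-3 * t ^ 2 * (3 * t ^ 2) - (1 - t ^ 3) * (6 * t)) / (3 * t ^ 2) ^ 2) t := by
    have hnum : HasDerivAt (fun x : ℝ => 1 - x ^ 3) (-3 * t ^ 2) t := by
      have := (hid.fun_pow 3).const_sub 1
      refine this.congr_deriv ?_
      norm_num
    have hden : HasDerivAt (fun x : ℝ => 3 * x ^ 2) (6 * t) t := by
      have := (hid.fun_pow 2).const_mul 3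
      refine this.congr_deriv ?_
      push_cast
      ring
    exact hnum.div hden h3t
  -- (1 - t^2)/(2 t^2)
  have hq2 : HasDerivAt (fun x : ℝ => (1 - x ^ 2) / (2 * x ^ 2))
      ((-2 * t * (2 * t ^ 2) - (1 - t ^ 2) * (4 * t)) / (2 * t ^ 2) ^ 2) t := by
    have hnum : HasDerivAt (fun x : ℝ => 1 - x ^ 2) (-2 * t) t := by
      have := (hid.fun_pow 2).const_sub 1
      refine this.congr_deriv ?_
      push_cast
      ring
    have hden : HasDerivAt (fun x : ℝ => 2 * x ^ 2) (4 * t) t := by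
      have := (hid.fun_pow 2).const_mul 2
      refine this.congr_deriv ?_
      push_cast
      ring
    exact hnum.div hden h2t
  have hinv : HasDerivAt (fun x : ℝ => 1 / x) (-(1 / t ^ 2)) t := by
    have := hasDerivAt_inv ht
    simpa [one_div] using this
  have hInner : HasDerivAt
      (fun x : ℝ => (1 - x ^ 2) / (2 * x ^ 2) * (Real.log (1 + x) - Real.log (1 - x)) - 1 / x)
      (((-2 * t * (2 * t ^ 2) - (1 - t ^ 2) * (4 * t)) / (2 * t ^ 2) ^ 2) *
          (Real.log (1 + t) - Real.log (1 - t)) +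
        (1 - t ^ 2) / (2 * t ^ 2) * (1 / (1 + t) + 1 / (1 - t)) - -(1 / t ^ 2)) t :=
    (hq2.mul hL).sub hinv
  have := hq1.fun_mul hInner
  unfold Fk Fd
  refine this.congr_deriv ?_
  field_simp
  ring

/-- The key logarithmic inequality: `log((1+t)/(1−t)) ≤ 2t + 2t³/(3(1−t²))`. -/
lemma log_ratio_le {t : ℝ} (h0 : 0 ≤ t) (h1 : t < 1) :
    Real.log (1 + t) - Real.log (1 - t) ≤ 2 * t + 2 * t ^ 3 / (3 * (1 - t ^ 2)) := by
  set d : ℝ → ℝ := fun x =>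
    2 * x + 2 * x ^ 3 / (3 * (1 - x ^ 2)) - (Real.log (1 + x) - Real.log (1 - x)) with hd
  have hderiv : ∀ x ∈ Set.Ioo (-1 : ℝ) 1,
      HasDerivAt d (4 * x ^ 4 / (3 * (1 - x ^ 2) ^ 2)) x := by
    intro x hx
    obtain ⟨hxm, hxp⟩ := hx
    have hp0 : (0 : ℝ) < 1 + x := by linarith
    have hm0 : (0 : ℝ) < 1 - x := by linarith
    have hp : (1 : ℝ) + x ≠ 0 := ne_of_gt hp0
    have hm : (1 : ℝ) - x ≠ 0 := ne_of_gt hm0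
    have hsq : (3 : ℝ) * (1 - x ^ 2) ≠ 0 := by
      have : (0 : ℝ) < 1 - x ^ 2 := by nlinarith
      positivity
    have hid : HasDerivAt (fun y : ℝ => y) 1 x := hasDerivAt_id x
    have hlp : HasDerivAt (fun y : ℝ => Real.log (1 + y)) (1 / (1 + x)) x := by
      simpa using (hid.const_add 1).log hp
    have hlm : HasDerivAt (fun y : ℝ => Real.log (1 - y)) (-(1 / (1 - x))) x := by
      have := (hid.const_sub 1).log hm
      convert this using 1
      field_simp
    have hnum : HasDerivAt (fun y : ℝ => 2 * y ^ 3) (6 * x ^ 2) x := by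
      have := (hid.fun_pow 3).const_mul 2
      refine this.congr_deriv ?_
      push_cast
      ring
    have hden : HasDerivAt (fun y : ℝ => 3 * (1 - y ^ 2)) (-6 * x) x := by
      have := ((hid.fun_pow 2).const_sub 1).const_mul 3
      refine this.congr_deriv ?_
      push_cast
      ring
    have hq : HasDerivAt (fun y : ℝ => 2 * y ^ 3 / (3 * (1 - y ^ 2)))
        ((6 * x ^ 2 * (3 * (1 - x ^ 2)) - 2 * x ^ 3 * (-6 * x)) / (3 * (1 - x ^ 2)) ^ 2) x :=
      hnum.div hden hsq
    have hlin : HasDerivAt (fun y : ℝ => 2 * y) 2 x := by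
      simpa using hid.const_mul 2
    have := (hlin.fun_add hq).fun_sub (hlp.fun_sub hlm)
    rw [hd]
    refine this.congr_deriv ?_
    have h1m : (1 : ℝ) - x ^ 2 ≠ 0 := by
      have : (0 : ℝ) < 1 - x ^ 2 := by nlinarith
      positivity
    field_simp
    ring
  have hmono : MonotoneOn d (Set.Ico (0 : ℝ) 1) := by
    apply monotoneOn_of_deriv_nonneg (convex_Ico 0 1)
    · intro x hx
      have hx' : x ∈ Set.Ioo (-1 : ℝ) 1 := ⟨by linarith [hx.1], hx.2⟩
      exact ((hderiv x hx').differentiableAt).continuousAt.continuousWithinAt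
    · intro x hx
      rw [interior_Ico] at hx
      have hx' : x ∈ Set.Ioo (-1 : ℝ) 1 := ⟨by linarith [hx.1], hx.2⟩
      exact ((hderiv x hx').differentiableAt).differentiableWithinAt
    · intro x hx
      rw [interior_Ico] at hx
      have hx' : x ∈ Set.Ioo (-1 : ℝ) 1 := ⟨by linarith [hx.1], hx.2⟩
      rw [(hderiv x hx').deriv]
      have : (0 : ℝ) < 1 - x ^ 2 := by nlinarith [hx.1, hx.2]
      positivity
  have h00 : (0 : ℝ) ∈ Set.Ico (0 : ℝ) 1 := ⟨le_refl 0, one_pos⟩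
  have htt : t ∈ Set.Ico (0 : ℝ) 1 := ⟨h0, h1⟩
  have := hmono h00 htt h0
  have hd0 : d 0 = 0 := by simp [hd]
  rw [hd0] at this
  simp only [hd] at this
  linarith

lemma Fd_nonneg {t : ℝ} (h0 : 0 < t) (h1 : t < 1) : 0 ≤ Fd t := by
  have hm2 : (0 : ℝ) < 1 - t ^ 2 := by nlinarith
  have h5 : t ^ 5 < 1 := by
    calc t ^ 5 < 1 ^ 5 := by
          exact pow_lt_pow_left₀ h1 h0.le (by norm_num)
    _ = 1 := one_pow 5
  have h3 : t ^ 3 < 1 := by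
    calc t ^ 3 < 1 ^ 3 := by
          exact pow_lt_pow_left₀ h1 h0.le (by norm_num)
    _ = 1 := one_pow 3
  set L := Real.log (1 + t) - Real.log (1 - t) with hLdef
  have hL : L ≤ 2 * t + 2 * t ^ 3 / (3 * (1 - t ^ 2)) := log_ratio_le h0.le h1
  have hLpos : 0 ≤ L := by
    have h1t : Real.log (1 - t) ≤ 0 := Real.log_nonpos (by linarith) (by linarith)
    have h2t : 0 ≤ Real.log (1 + t) := Real.log_nonneg (by linarith)
    rw [hLdef]; linarith
  have hcpos : 0 ≤ 4 - 2 * t ^ 2 - t ^ 3 - t ^ 5 := by nlinarith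
  have key : (4 - 2 * t ^ 2 - t ^ 3 - t ^ 5) * L ≤ 2 * t * (4 - t ^ 3) := by
    have hB : (4 - 2 * t ^ 2 - t ^ 3 - t ^ 5) * L ≤
        (4 - 2 * t ^ 2 - t ^ 3 - t ^ 5) * (2 * t + 2 * t ^ 3 / (3 * (1 - t ^ 2))) :=
      mul_le_mul_of_nonneg_left hL hcpos
    refine hB.trans ?_
    rw [← sub_nonneg]
    have hpoly : (0 : ℝ) ≤ t ^ 4 + t ^ 3 - t ^ 2 + t + 1 := by nlinarith
    have heq : 2 * t * (4 - t ^ 3) -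
        (4 - 2 * t ^ 2 - t ^ 3 - t ^ 5) * (2 * t + 2 * t ^ 3 / (3 * (1 - t ^ 2))) =
        (4 * t ^ 3 * (1 - t)) * (t ^ 4 + t ^ 3 - t ^ 2 + t + 1) / (3 * (1 - t ^ 2)) := by
      field_simp
      ring
    rw [heq]
    have hfac : (0 : ℝ) ≤ 4 * t ^ 3 * (1 - t) := mul_nonneg (by positivity) (by linarith)
    exact div_nonneg (mul_nonneg hfac hpoly) (by positivity)
  unfold Fd
  rw [← hLdef]
  have h6 : (0 : ℝ) < 6 * t ^ 5 := by positivity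
  have expand : (t ^ 5 + t ^ 3 + 2 * t ^ 2 - 4) / (6 * t ^ 5) * L + (4 - t ^ 3) / (3 * t ^ 4) =
      (2 * t * (4 - t ^ 3) - (4 - 2 * t ^ 2 - t ^ 3 - t ^ 5) * L) / (6 * t ^ 5) := by
    field_simp
    ring
  rw [expand]
  exact div_nonneg (by linarith) h6.le

/-- Monotonicity of `Fk` on `(0,1)`. -/
lemma Fk_monotone : MonotoneOn Fk (Set.Ioo (0 : ℝ) 1) := by
  apply monotoneOn_of_deriv_nonneg (convex_Ioo 0 1)
  · intro x hx
    exact ((hasDerivAt_Fk hx.1 hx.2).differentiableAt).continuousAt.continuousWithinAt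
  · intro x hx
    rw [interior_Ioo] at hx
    exact ((hasDerivAt_Fk hx.1 hx.2).differentiableAt).differentiableWithinAt
  · intro x hx
    rw [interior_Ioo] at hx
    rw [(hasDerivAt_Fk hx.1 hx.2).deriv]
    exact Fd_nonneg hx.1 hx.2

/-- Obstruction in dimension three: if `ψ` inverts `φ(t) = log(1−t³)` on
`(0,1)` (so that `ψ` coincides with `φ⁻¹` on `(−∞,0)`), then `H ∘ φ⁻¹` is
concave on `(−∞,0)`. -/
theorem obstruction_dimension_three (ψ : ℝ → ℝ)
    (hψ : ∀ t ∈ Set.Ioo (0 : ℝ) 1, ψ (phiCube t) = t) :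
    ConcaveOn ℝ (Set.Iio (0 : ℝ)) (fun s => Hkernel (ψ s)) := by
  set T : ℝ → ℝ := fun s => (1 - Real.exp s) ^ ((1 : ℝ) / 3) with hT
  -- basic facts about T on Iio 0
  have hTfact : ∀ s : ℝ, s < 0 → 0 < T s ∧ T s < 1 ∧ (T s) ^ 3 = 1 - Real.exp s := by
    intro s hs
    have he0 : 0 < Real.exp s := Real.exp_pos s
    have he1 : Real.exp s < 1 := by
      rw [Real.exp_lt_one_iff]; exact hs
    have hu0 : 0 < 1 - Real.exp s := by linarith
    have hu1 : 1 - Real.exp s < 1 := by linarith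
    refine ⟨Real.rpow_pos_of_pos hu0 _, ?_, ?_⟩
    · rw [hT]
      exact Real.rpow_lt_one hu0.le hu1 (by norm_num)
    · rw [hT]
      have : ((1 - Real.exp s) ^ ((1 : ℝ) / 3)) ^ (3 : ℕ) =
          (1 - Real.exp s) ^ (((1 : ℝ) / 3) * (3 : ℕ)) := by
        rw [← Real.rpow_natCast ((1 - Real.exp s) ^ ((1 : ℝ) / 3)) 3,
          ← Real.rpow_mul hu0.le]
      rw [this]
      norm_num
  -- ψ agrees with T on Iio 0
  have hEq : ∀ s : ℝ, s < 0 → ψ s = T s := by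
    intro s hs
    obtain ⟨h0, h1, h3⟩ := hTfact s hs
    have := hψ (T s) ⟨h0, h1⟩
    rwa [phiCube, h3, sub_sub_cancel, Real.log_exp] at this
  -- derivative of the composition
  have hTd : ∀ s : ℝ, s < 0 →
      HasDerivAt (fun x => Hkernel (T x)) (Fk (T s)) s := by
    intro s hs
    obtain ⟨h0, h1, h3⟩ := hTfact s hs
    have he0 : 0 < Real.exp s := Real.exp_pos s
    have hu0 : 0 < 1 - Real.exp s := by nlinarith [h3, pow_pos h0 3]
    have hu : HasDerivAt (fun x : ℝ => 1 - Real.exp x) (-Real.exp s) s := by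
      simpa using (Real.hasDerivAt_exp s).const_sub 1
    have hTds : HasDerivAt T
        (-Real.exp s * ((1 : ℝ) / 3) * (1 - Real.exp s) ^ ((1 : ℝ) / 3 - 1)) s := by
      rw [hT]
      exact hu.rpow_const (Or.inl (ne_of_gt hu0))
    have hcomp := (hasDerivAt_Hkernel h0 h1).comp s hTds
    have hval : Hd (T s) * (-Real.exp s * ((1 : ℝ) / 3) *
        (1 - Real.exp s) ^ ((1 : ℝ) / 3 - 1)) = Fk (T s) := by
      have hexp : Real.exp s = 1 - (T s) ^ 3 := by linarith [h3]
      have hpow : (1 - Real.exp s) ^ ((1 : ℝ) / 3 - 1) = ((T s) ^ 2)⁻¹ := by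
        rw [← h3, ← Real.rpow_natCast (T s) 3, ← Real.rpow_mul h0.le]
        norm_num
      rw [hpow, hexp]
      set t := T s
      have ht : t ≠ 0 := ne_of_gt h0
      have hp : (1 : ℝ) + t ≠ 0 := by positivity
      unfold Hd Fk
      field_simp
      ring
    rw [← hval]
    exact hcomp
  -- concavity of the composition with T
  have hgT : ConcaveOn ℝ (Set.Iio (0 : ℝ)) (fun s => Hkernel (T s)) := by
    apply AntitoneOn.concaveOn_of_deriv (convex_Iio 0)
    · intro s hs
      exact ((hTd s hs).differentiableAt).continuousAt.continuousWithinAt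
    · intro s hs
      rw [interior_Iio] at hs
      exact ((hTd s hs).differentiableAt).differentiableWithinAt
    · rw [interior_Iio]
      intro s₁ h₁ s₂ h₂ h12
      rw [(hTd s₁ h₁).deriv, (hTd s₂ h₂).deriv]
      obtain ⟨ha0, ha1, -⟩ := hTfact s₁ h₁
      obtain ⟨hb0, hb1, -⟩ := hTfact s₂ h₂
      apply Fk_monotone ⟨hb0, hb1⟩ ⟨ha0, ha1⟩
      -- T s₂ ≤ T s₁
      rw [hT]
      apply Real.rpow_le_rpow (by nlinarith [Real.exp_pos s₂, Real.exp_lt_one_iff.mpr h₂])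
        (by have := Real.exp_le_exp.mpr h12; linarith) (by norm_num)
  -- transfer through hEq
  refine ⟨hgT.1, fun x hx y hy a b ha hb hab => ?_⟩
  have hm : a • x + b • y ∈ Set.Iio (0 : ℝ) := hgT.1 hx hy ha hb hab
  have h1 := hgT.2 hx hy ha hb hab
  simp only [hEq x hx, hEq y hy, hEq _ hm]
  simpa using h1
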